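/- Let R be a ring, θ an additive invariant on finite-length R-modules, and T a finite-length R-module. Suppose X' ⊆ T is a submodule with X' in 𝓘_θ and T/X' in 𝓟̄_θ, and X'' ⊆ T is a submodule with X'' in 𝓘̄_θ and T/X'' in 𝓟_θ. Then X' ⊆ X'' and the subquotient X''/X' is θ-semistable. -/

import Mathlib

universe u

/-- An *additive invariant* on finite-length modules over a ring `R`: an assignment of a real
number to every module (whose value is only constrained on finite-length modules) that is
invariant under isomorphism and additive in short exact sequences. -/
structure AdditiveInvariant (R : Type u) [Ring R] where
  /-- The value of the invariant on a module. -/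
  val : (M : Type u) → [AddCommGroup M] → [Module R M] → ℝ
  /-- Isomorphism invariance on finite-length modules. -/
  iso_inv : ∀ (M N : Type u) [AddCommGroup M] [Module R M] [AddCommGroup N] [Module R N],
    IsFiniteLength R M → (M ≃ₗ[R] N) → val M = val N
  /-- Additivity with respect to submodules and quotients, on finite-length modules. -/
  additive : ∀ (M : Type u) [AddCommGroup M] [Module R M], IsFiniteLength R M →
    ∀ N : Submodule R M, val M = val N + val (M ⧸ N)

variable {R : Type u} [Ring R]

/-- `M` lies in `𝓘_θ`: every nonzero quotient `Q` of `M` satisfies `θ(Q) > 0`. -/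
def MemI (θ : AdditiveInvariant R) (M : Type u) [AddCommGroup M] [Module R M] : Prop :=
  ∀ N : Submodule R M, N ≠ ⊤ → 0 < θ.val (M ⧸ N)

/-- `M` lies in `𝓘̄_θ`: every nonzero quotient `Q` of `M` satisfies `θ(Q) ≥ 0`. -/
def MemIbar (θ : AdditiveInvariant R) (M : Type u) [AddCommGroup M] [Module R M] : Prop :=
  ∀ N : Submodule R M, N ≠ ⊤ → 0 ≤ θ.val (M ⧸ N)

/-- `M` lies in `𝓟_θ`: every nonzero submodule `X` of `M` satisfies `θ(X) < 0`. -/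
def MemP (θ : AdditiveInvariant R) (M : Type u) [AddCommGroup M] [Module R M] : Prop :=
  ∀ X : Submodule R M, X ≠ ⊥ → θ.val X < 0

/-- `M` lies in `𝓟̄_θ`: every nonzero submodule `X` of `M` satisfies `θ(X) ≤ 0`. -/
def MemPbar (θ : AdditiveInvariant R) (M : Type u) [AddCommGroup M] [Module R M] : Prop :=
  ∀ X : Submodule R M, X ≠ ⊥ → θ.val X ≤ 0

/-- `M` is `θ`-semistable: `θ(M) = 0` and every submodule `X` of `M` satisfies `θ(X) ≤ 0`. -/
def Semistable (θ : AdditiveInvariant R) (M : Type u) [AddCommGroup M] [Module R M] : Prop :=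
  θ.val M = 0 ∧ ∀ X : Submodule R M, θ.val X ≤ 0

lemma fl_sub {M : Type u} [AddCommGroup M] [Module R M] (h : IsFiniteLength R M)
    (N : Submodule R M) : IsFiniteLength R N := by
  rw [isFiniteLength_iff_isNoetherian_isArtinian] at h ⊢
  obtain ⟨h1, h2⟩ := h
  exact ⟨inferInstance, inferInstance⟩

lemma fl_quot {M : Type u} [AddCommGroup M] [Module R M] (h : IsFiniteLength R M)
    (N : Submodule R M) : IsFiniteLength R (M ⧸ N) := by
  rw [isFiniteLength_iff_isNoetherian_isArtinian] at h ⊢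
  obtain ⟨h1, h2⟩ := h
  exact ⟨inferInstance, inferInstance⟩

noncomputable def equivOfSubsingleton {A B : Type u} [AddCommGroup A] [Module R A]
    [AddCommGroup B] [Module R B] [Subsingleton A] [Subsingleton B] : A ≃ₗ[R] B :=
  LinearEquiv.ofLinear 0 0 (Subsingleton.elim _ _) (Subsingleton.elim _ _)

lemma theta_zero_of_subsingleton (θ : AdditiveInvariant R) (M : Type u) [AddCommGroup M]
    [Module R M] [Subsingleton M] : θ.val M = 0 := by
  have hfl : IsFiniteLength R M := .of_subsingleton
  have h := θ.additive M hfl ⊤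
  have h1 : θ.val (⊤ : Submodule R M) = θ.val M :=
    θ.iso_inv _ _ (fl_sub hfl ⊤) (Submodule.topEquiv)
  have h2 : θ.val M = θ.val (M ⧸ (⊤ : Submodule R M)) :=
    θ.iso_inv _ _ hfl equivOfSubsingleton
  rw [h1, ← h2] at h
  linarith

lemma memPbar' {θ : AdditiveInvariant R} {M : Type u} [AddCommGroup M] [Module R M]
    (_hM : IsFiniteLength R M) (hP : MemPbar θ M) (X : Submodule R M) : θ.val X ≤ 0 := by
  by_cases hX : X = ⊥
  · subst hX
    have : Subsingleton (⊥ : Submodule R M) := by infer_instance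
    exact le_of_eq (theta_zero_of_subsingleton θ _)
  · exact hP X hX

/-- **Proposition.** If `X' ⊆ T` satisfies `X' ∈ 𝓘_θ`, `T/X' ∈ 𝓟̄_θ` (so `X' = T_θ^min`)
and `X'' ⊆ T` satisfies `X'' ∈ 𝓘̄_θ`, `T/X'' ∈ 𝓟_θ` (so `X'' = T_θ^max`), then
`X' ⊆ X''` and the subquotient `X''/X'` is `θ`-semistable. -/
theorem min_le_max_and_semistable (R : Type u) [Ring R] (θ : AdditiveInvariant R)
    (T : Type u) [AddCommGroup T] [Module R T] (hT : IsFiniteLength R T)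
    (X' X'' : Submodule R T)
    (hX'I : MemI θ X') (hX'P : MemPbar θ (T ⧸ X'))
    (hX''I : MemIbar θ X'') (hX''P : MemP θ (T ⧸ X'')) :
    X' ≤ X'' ∧ Semistable θ (X'' ⧸ Submodule.comap X''.subtype X') := by
  have hle : X' ≤ X'' := by
    by_contra hcon
    set f : X' →ₗ[R] T ⧸ X'' := X''.mkQ.comp X'.subtype with hf
    have hker : LinearMap.ker f = Submodule.comap X'.subtype X'' := by
      rw [hf, LinearMap.ker_comp, Submodule.ker_mkQ]
    have hker_ne : LinearMap.ker f ≠ ⊤ := by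
      rw [hker]
      intro h
      exact hcon (Submodule.comap_subtype_eq_top.mp h)
    have hrange_ne : LinearMap.range f ≠ ⊥ := by
      intro h
      rw [LinearMap.range_eq_bot] at h
      exact hker_ne (by rw [h, LinearMap.ker_zero])
    have h1 : 0 < θ.val (X' ⧸ LinearMap.ker f) := hX'I _ hker_ne
    have h2 : θ.val (LinearMap.range f) < 0 := hX''P _ hrange_ne
    have h3 : θ.val (X' ⧸ LinearMap.ker f) = θ.val (LinearMap.range f) :=
      θ.iso_inv _ _ (fl_quot (fl_sub hT X') _) f.quotKerEquivRange
    exact lt_asymm h2 (h3 ▸ h1)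
  refine ⟨hle, ?_⟩
  set N : Submodule R X'' := Submodule.comap X''.subtype X' with hN
  have hflM : IsFiniteLength R (X'' ⧸ N) := fl_quot (fl_sub hT X'') N
  -- the injective map g : X''⧸N → T⧸X'
  have hkerle : N ≤ LinearMap.ker (X'.mkQ.comp X''.subtype) := by
    rw [LinearMap.ker_comp, Submodule.ker_mkQ]
  set g : (X'' ⧸ N) →ₗ[R] T ⧸ X' := N.liftQ (X'.mkQ.comp X''.subtype) hkerle with hg
  have hginj : Function.Injective g := by
    rw [← LinearMap.ker_eq_bot, hg]
    rw [Submodule.ker_liftQ_eq_bot]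
    rw [LinearMap.ker_comp, Submodule.ker_mkQ]
  have hsub : ∀ X : Submodule R (X'' ⧸ N), θ.val X ≤ 0 := by
    intro X
    have hiso : θ.val X = θ.val (X.map g) :=
      θ.iso_inv _ _ (fl_sub hflM X) (Submodule.equivMapOfInjective g hginj X)
    rw [hiso]
    exact memPbar' (fl_quot hT X') hX'P _
  have hMle : θ.val (X'' ⧸ N) ≤ 0 := by
    have : θ.val (X'' ⧸ N) = θ.val (⊤ : Submodule R (X'' ⧸ N)) :=
      (θ.iso_inv _ _ (fl_sub hflM ⊤) Submodule.topEquiv).symm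
    rw [this]
    exact hsub ⊤
  have hMge : 0 ≤ θ.val (X'' ⧸ N) := by
    by_cases hNtop : N = ⊤
    · have : Subsingleton (X'' ⧸ N) := Submodule.Quotient.subsingleton_iff.mpr hNtop
      exact le_of_eq (theta_zero_of_subsingleton θ _).symm
    · exact hX''I N hNtop
  exact ⟨le_antisymm hMle hMge, hsub⟩
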